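/- Let G_X be the graph constructed as follows: start with a bipartite graph on parts V = {v_1,…,v_r}, W = {w_1,…,w_r} given by 0/1 matrix X; fix indices I, J; add vertices a, b with edge a–b; add an edge from every vertex of V ∖ {v_I} to a and from every vertex of W ∖ {w_J} to a; add vertices u, y, u', y', z with edges u–u', y–y', u–z, y–z; add an edge from every vertex of V ∪ W ∪ {a, b} to each of u and y. If v_I w_J is an edge of the bipartite part (X_{I,J} = 1), then {u, u', y, y', a, v_I} is a Liar's dominating set of G_X of size 6. -/
import Mathlib


/-- Closed neighborhood of a vertex. -/
def closedNbr {V : Type*} (G : SimpleGraph V) (v : V) : Set V :=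
  insert v (G.neighborSet v)

/-- `D` is a `k`-tuple dominating set of `G`. -/
def IsKTupleDomSet {V : Type*} (G : SimpleGraph V) (k : ℕ) (D : Set V) : Prop :=
  ∀ v : V, k ≤ (closedNbr G v ∩ D).ncard

/-- `L` is a Liar's dominating set of `G`. -/
def IsLiarsDomSet {V : Type*} (G : SimpleGraph V) (L : Set V) : Prop :=
  (∀ v : V, 2 ≤ (closedNbr G v ∩ L).ncard) ∧
  (∀ u v : V, u ≠ v → 3 ≤ ((closedNbr G u ∪ closedNbr G v) ∩ L).ncard)
/-- Vertex type of the streaming lower-bound graph for LDS: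
the bipartite parts V and W, plus gadget vertices coded in `Fin 7`:
0 = a, 1 = b, 2 = u, 3 = y, 4 = u', 5 = y', 6 = z. -/
abbrev VtxL (r : ℕ) := (Fin r ⊕ Fin r) ⊕ Fin 7

/-- The base (asymmetric) edge relation of the graph G_X for the LDS lower bound. -/
def relL (r : ℕ) (X : Fin r → Fin r → Bool) (I J : Fin r) :
    VtxL r → VtxL r → Prop
  | Sum.inl (Sum.inl i), Sum.inl (Sum.inr j) => X i j = true
  | Sum.inl x, Sum.inr g =>
      (g = 2 ∨ g = 3) ∨
        (g = 0 ∧ (match x with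
          | Sum.inl i => i ≠ I
          | Sum.inr j => j ≠ J))
  | Sum.inr g, Sum.inr g' =>
      (g = 0 ∧ g' = 1) ∨ (g = 2 ∧ g' = 4) ∨ (g = 3 ∧ g' = 5) ∨
        (g = 2 ∧ g' = 6) ∨ (g = 3 ∧ g' = 6) ∨
        (g = 0 ∧ g' = 2) ∨ (g = 0 ∧ g' = 3) ∨ (g = 1 ∧ g' = 2) ∨ (g = 1 ∧ g' = 3)
  | _, _ => False

/-- The graph G_X of the LDS streaming lower bound. -/
def graphL (r : ℕ) (X : Fin r → Fin r → Bool) (I J : Fin r) : SimpleGraph (VtxL r) :=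
  SimpleGraph.fromRel (relL r X I J)
lemma adjL {r : ℕ} {X : Fin r → Fin r → Bool} {I J : Fin r} {x y : VtxL r}
    (hne : x ≠ y) (h : relL r X I J x y ∨ relL r X I J y x) :
    (graphL r X I J).Adj x y := by
  rw [graphL, SimpleGraph.fromRel_adj]; exact ⟨hne, h⟩

lemma lds_ncard3 {α : Type*} {S : Set α} (hfin : S.Finite) {x y z : α}
    (hxy : x ≠ y) (hxz : x ≠ z) (hyz : y ≠ z)
    (hx : x ∈ S) (hy : y ∈ S) (hz : z ∈ S) : 3 ≤ S.ncard := by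
  have hsub : ({x, y, z} : Set α) ⊆ S := by
    simp [Set.insert_subset_iff, hx, hy, hz]
  have h3 : ({x, y, z} : Set α).ncard = 3 := by
    rw [Set.ncard_insert_of_notMem (by simp [hxy, hxz]),
        Set.ncard_insert_of_notMem (by simp [hyz]), Set.ncard_singleton]
  exact h3 ▸ Set.ncard_le_ncard hsub hfin

lemma lds_ncard2 {α : Type*} {S : Set α} (hfin : S.Finite) {x y : α}
    (hxy : x ≠ y) (hx : x ∈ S) (hy : y ∈ S) : 2 ≤ S.ncard := by
  have hsub : ({x, y} : Set α) ⊆ S := by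
    simp [Set.insert_subset_iff, hx, hy]
  have h2 : ({x, y} : Set α).ncard = 2 := by
    rw [Set.ncard_insert_of_notMem (by simp [hxy]), Set.ncard_singleton]
  exact h2 ▸ Set.ncard_le_ncard hsub hfin

theorem lds_gadget_yes_instance (r : ℕ) (X : Fin r → Fin r → Bool) (I J : Fin r)
    (hX : X I J = true) :
    IsLiarsDomSet (graphL r X I J)
        ({Sum.inr 2, Sum.inr 4, Sum.inr 3, Sum.inr 5, Sum.inr 0,
          Sum.inl (Sum.inl I)} : Set (VtxL r)) ∧
      ({Sum.inr 2, Sum.inr 4, Sum.inr 3, Sum.inr 5, Sum.inr 0,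
          Sum.inl (Sum.inl I)} : Set (VtxL r)).ncard = 6 := by
  set G := graphL r X I J with hGdef
  set L : Set (VtxL r) :=
    {Sum.inr 2, Sum.inr 4, Sum.inr 3, Sum.inr 5, Sum.inr 0, Sum.inl (Sum.inl I)} with hLdef
  -- membership helpers
  have hmem : ∀ (w v : VtxL r), (v = w ∨ G.Adj w v) → v ∈ L →
      v ∈ closedNbr G w ∩ L := by
    intro w v h hv
    refine ⟨?_, hv⟩
    rcases h with rfl | h
    · exact Set.mem_insert _ _
    · exact Set.mem_insert_of_mem _ h
  have hmemU : ∀ (w w' v : VtxL r),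
      ((v = w ∨ G.Adj w v) ∨ (v = w' ∨ G.Adj w' v)) → v ∈ L →
      v ∈ (closedNbr G w ∪ closedNbr G w') ∩ L := by
    intro w w' v h hv
    rcases h with h | h
    · exact ⟨Or.inl (hmem w v h hv).1, hv⟩
    · exact ⟨Or.inr (hmem w' v h hv).1, hv⟩
  -- adjacency facts
  have adj_x_u : ∀ x : Fin r ⊕ Fin r, G.Adj (Sum.inl x) (Sum.inr 2) :=
    fun x => adjL (by simp) (Or.inl (by simp [relL]))
  have adj_x_y : ∀ x : Fin r ⊕ Fin r, G.Adj (Sum.inl x) (Sum.inr 3) :=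
    fun x => adjL (by simp) (Or.inl (by simp [relL]))
  have adj_vi_a : ∀ i : Fin r, i ≠ I → G.Adj (Sum.inl (Sum.inl i)) (Sum.inr 0) :=
    fun i hi => adjL (by simp) (Or.inl (by simp [relL, hi]))
  have adj_wj_a : ∀ j : Fin r, j ≠ J → G.Adj (Sum.inl (Sum.inr j)) (Sum.inr 0) :=
    fun j hj => adjL (by simp) (Or.inl (by simp [relL, hj]))
  have adj_vI_wJ : G.Adj (Sum.inl (Sum.inl I)) (Sum.inl (Sum.inr J)) :=
    adjL (by simp) (Or.inl (by simp [relL, hX]))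
  have adj01 : G.Adj (Sum.inr 0) (Sum.inr 1) := adjL (by simp) (Or.inl (by simp [relL]))
  have adj02 : G.Adj (Sum.inr 0) (Sum.inr 2) := adjL (by simp) (Or.inl (by simp [relL]))
  have adj03 : G.Adj (Sum.inr 0) (Sum.inr 3) := adjL (by simp) (Or.inl (by simp [relL]))
  have adj12 : G.Adj (Sum.inr 1) (Sum.inr 2) := adjL (by simp) (Or.inl (by simp [relL]))
  have adj13 : G.Adj (Sum.inr 1) (Sum.inr 3) := adjL (by simp) (Or.inl (by simp [relL]))
  have adj24 : G.Adj (Sum.inr 2) (Sum.inr 4) := adjL (by simp) (Or.inl (by simp [relL]))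
  have adj35 : G.Adj (Sum.inr 3) (Sum.inr 5) := adjL (by simp) (Or.inl (by simp [relL]))
  have adj26 : G.Adj (Sum.inr 2) (Sum.inr 6) := adjL (by simp) (Or.inl (by simp [relL]))
  have adj36 : G.Adj (Sum.inr 3) (Sum.inr 6) := adjL (by simp) (Or.inl (by simp [relL]))
  -- memberships in L
  have m2 : (Sum.inr 2 : VtxL r) ∈ L := by simp [hLdef]
  have m4 : (Sum.inr 4 : VtxL r) ∈ L := by simp [hLdef]
  have m3 : (Sum.inr 3 : VtxL r) ∈ L := by simp [hLdef]
  have m5 : (Sum.inr 5 : VtxL r) ∈ L := by simp [hLdef]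
  have m0 : (Sum.inr 0 : VtxL r) ∈ L := by simp [hLdef]
  have mI : (Sum.inl (Sum.inl I) : VtxL r) ∈ L := by simp [hLdef]
  -- master lemma
  have master : ∀ v : VtxL r, 3 ≤ (closedNbr G v ∩ L).ncard ∨
      (v = Sum.inr 4 ∨ v = Sum.inr 5 ∨ v = Sum.inr 6) := by
    rintro ((i | j) | g)
    · left
      by_cases hi : i = I
      · subst hi
        exact lds_ncard3 (Set.toFinite _) (by simp) (by simp) (by simp)
          (hmem _ _ (Or.inr (adj_x_u _)) m2) (hmem _ _ (Or.inr (adj_x_y _)) m3)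
          (hmem _ _ (Or.inl rfl) mI)
      · exact lds_ncard3 (Set.toFinite _) (by simp) (by simp) (by simp)
          (hmem _ _ (Or.inr (adj_x_u _)) m2) (hmem _ _ (Or.inr (adj_x_y _)) m3)
          (hmem _ _ (Or.inr (adj_vi_a i hi)) m0)
    · left
      by_cases hj : j = J
      · subst hj
        exact lds_ncard3 (Set.toFinite _) (by simp) (by simp) (by simp)
          (hmem _ _ (Or.inr (adj_x_u _)) m2) (hmem _ _ (Or.inr (adj_x_y _)) m3)
          (hmem _ _ (Or.inr adj_vI_wJ.symm) mI)
      · exact lds_ncard3 (Set.toFinite _) (by simp) (by simp) (by simp)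
          (hmem _ _ (Or.inr (adj_x_u _)) m2) (hmem _ _ (Or.inr (adj_x_y _)) m3)
          (hmem _ _ (Or.inr (adj_wj_a j hj)) m0)
    · fin_cases g
      · exact Or.inl (lds_ncard3 (Set.toFinite _) (by simp) (by simp) (by simp)
          (hmem _ _ (Or.inl rfl) m0) (hmem _ _ (Or.inr adj02) m2)
          (hmem _ _ (Or.inr adj03) m3))
      · exact Or.inl (lds_ncard3 (Set.toFinite _) (by simp) (by simp) (by simp)
          (hmem _ _ (Or.inr adj01.symm) m0) (hmem _ _ (Or.inr adj12) m2)
          (hmem _ _ (Or.inr adj13) m3))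
      · exact Or.inl (lds_ncard3 (Set.toFinite _) (by simp) (by simp) (by simp)
          (hmem _ _ (Or.inl rfl) m2) (hmem _ _ (Or.inr adj24) m4)
          (hmem _ _ (Or.inr adj02.symm) m0))
      · exact Or.inl (lds_ncard3 (Set.toFinite _) (by simp) (by simp) (by simp)
          (hmem _ _ (Or.inl rfl) m3) (hmem _ _ (Or.inr adj35) m5)
          (hmem _ _ (Or.inr adj03.symm) m0))
      · exact Or.inr (Or.inl rfl)
      · exact Or.inr (Or.inr (Or.inl rfl))
      · exact Or.inr (Or.inr (Or.inr rfl))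
  have H2 : ∀ v : VtxL r, 2 ≤ (closedNbr G v ∩ L).ncard := by
    intro v
    rcases master v with h | (rfl | rfl | rfl)
    · omega
    · exact lds_ncard2 (Set.toFinite _) (by simp)
        (hmem _ _ (Or.inl rfl) m4) (hmem _ _ (Or.inr adj24.symm) m2)
    · exact lds_ncard2 (Set.toFinite _) (by simp)
        (hmem _ _ (Or.inl rfl) m5) (hmem _ _ (Or.inr adj35.symm) m3)
    · exact lds_ncard2 (Set.toFinite _) (by simp)
        (hmem _ _ (Or.inr adj26.symm) m2) (hmem _ _ (Or.inr adj36.symm) m3)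
  have pair : ∀ u v : VtxL r, u ≠ v →
      3 ≤ ((closedNbr G u ∪ closedNbr G v) ∩ L).ncard := by
    intro u v huv
    have hsub1 : closedNbr G u ∩ L ⊆ (closedNbr G u ∪ closedNbr G v) ∩ L :=
      fun x hx => ⟨Or.inl hx.1, hx.2⟩
    have hsub2 : closedNbr G v ∩ L ⊆ (closedNbr G u ∪ closedNbr G v) ∩ L :=
      fun x hx => ⟨Or.inr hx.1, hx.2⟩
    rcases master u with h | hu
    · exact le_trans h (Set.ncard_le_ncard hsub1 (Set.toFinite _))
    rcases master v with h | hv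
    · exact le_trans h (Set.ncard_le_ncard hsub2 (Set.toFinite _))
    rcases hu with rfl | rfl | rfl <;> rcases hv with rfl | rfl | rfl
    · exact absurd rfl huv
    · exact lds_ncard3 (Set.toFinite _) (by simp) (by simp) (by simp)
        (hmemU _ _ _ (Or.inl (Or.inl rfl)) m4)
        (hmemU _ _ _ (Or.inl (Or.inr adj24.symm)) m2)
        (hmemU _ _ _ (Or.inr (Or.inl rfl)) m5)
    · exact lds_ncard3 (Set.toFinite _) (by simp) (by simp) (by simp)
        (hmemU _ _ _ (Or.inl (Or.inl rfl)) m4)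
        (hmemU _ _ _ (Or.inl (Or.inr adj24.symm)) m2)
        (hmemU _ _ _ (Or.inr (Or.inr adj36.symm)) m3)
    · exact lds_ncard3 (Set.toFinite _) (by simp) (by simp) (by simp)
        (hmemU _ _ _ (Or.inl (Or.inl rfl)) m5)
        (hmemU _ _ _ (Or.inl (Or.inr adj35.symm)) m3)
        (hmemU _ _ _ (Or.inr (Or.inl rfl)) m4)
    · exact absurd rfl huv
    · exact lds_ncard3 (Set.toFinite _) (by simp) (by simp) (by simp)
        (hmemU _ _ _ (Or.inl (Or.inl rfl)) m5)
        (hmemU _ _ _ (Or.inl (Or.inr adj35.symm)) m3)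
        (hmemU _ _ _ (Or.inr (Or.inr adj26.symm)) m2)
    · exact lds_ncard3 (Set.toFinite _) (by simp) (by simp) (by simp)
        (hmemU _ _ _ (Or.inl (Or.inr adj26.symm)) m2)
        (hmemU _ _ _ (Or.inl (Or.inr adj36.symm)) m3)
        (hmemU _ _ _ (Or.inr (Or.inl rfl)) m4)
    · exact lds_ncard3 (Set.toFinite _) (by simp) (by simp) (by simp)
        (hmemU _ _ _ (Or.inl (Or.inr adj26.symm)) m2)
        (hmemU _ _ _ (Or.inl (Or.inr adj36.symm)) m3)
        (hmemU _ _ _ (Or.inr (Or.inl rfl)) m5)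
    · exact absurd rfl huv
  refine ⟨⟨H2, pair⟩, ?_⟩
  rw [hLdef]
  rw [Set.ncard_insert_of_notMem (by simp), Set.ncard_insert_of_notMem (by simp),
      Set.ncard_insert_of_notMem (by simp), Set.ncard_insert_of_notMem (by simp),
      Set.ncard_insert_of_notMem (by simp), Set.ncard_singleton]
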